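/- arXiv:2509.24013 — 2 statements merged into one kernel-verified Lean document; each statement's English description precedes it below -/
import Mathlib

section
/- Let G be a finite simple graph with α(G) ≥ 2. For i ∈ [α(G)] let a_i = w(i,G), and for j ∈ {2, …, α(G)} let d_j = ⌈(a_j − j·a_1)/(j−1)⌉. If N ≥ max{1, d_2, …, d_{α(G)}}, then ω(K_N ∨ G) = ρ(K_N ∨ G). -/
open Classical Finset

variable {V : Type*}

/-- Independence number of the subgraph of `G` induced on `D`. -/
noncomputable def indepNumOn (G : SimpleGraph V) [Fintype V] (D : Finset V) : ℕ :=
  (D.powerset.filter (fun s => ∀ x ∈ s, ∀ y ∈ s, x ≠ y → ¬ G.Adj x y)).sup Finset.card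

noncomputable def indepNum (G : SimpleGraph V) [Fintype V] : ℕ := indepNumOn G Finset.univ

noncomputable def cliqueNum (G : SimpleGraph V) [Fintype V] : ℕ :=
  (Finset.univ.powerset.filter
    (fun s : Finset V => ∀ x ∈ s, ∀ y ∈ s, x ≠ y → G.Adj x y)).sup Finset.card

/-- Hall ratio of `G`: max over nonempty (induced) subgraphs of |V(H)|/α(H). -/
noncomputable def hallRatio (G : SimpleGraph V) [Fintype V] : ℚ :=
  if h : (Finset.univ.powerset.filter (fun s : Finset V => s.Nonempty)).Nonempty then
    (Finset.univ.powerset.filter (fun s : Finset V => s.Nonempty)).sup' h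
      (fun D => (D.card : ℚ) / (indepNumOn G D : ℚ))
  else 0

/-- `wfun G a` : order of the largest induced subgraph of `G` with independence number `a`. -/
noncomputable def wfun (G : SimpleGraph V) [Fintype V] (a : ℕ) : ℕ :=
  (Finset.univ.powerset.filter (fun s : Finset V => indepNumOn G s = a)).sup Finset.card

/-- Join of two vertex-disjoint graphs. -/
def joinG {α β : Type*} (G : SimpleGraph α) (H : SimpleGraph β) : SimpleGraph (α ⊕ β) where
  Adj x y :=
    match x, y with
    | Sum.inl a, Sum.inl b => G.Adj a b
    | Sum.inr a, Sum.inr b => H.Adj a b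
    | Sum.inl _, Sum.inr _ => True
    | Sum.inr _, Sum.inl _ => True
  symm := by
    refine ⟨?_⟩
    rintro (a | a) (b | b) h <;> try trivial
    · exact h.symm
    · exact h.symm
  loopless := by
    refine ⟨?_⟩
    rintro (a | a) h
    · exact G.irrefl h
    · exact H.irrefl h

/-- `G` is `f`-choosable. -/
def Choosable (G : SimpleGraph V) (f : V → ℕ) : Prop :=
  ∀ L : V → Finset ℕ, (∀ v, (L v).card = f v) →
    ∃ c : V → ℕ, (∀ v, c v ∈ L v) ∧ ∀ u v, G.Adj u v → c u ≠ c v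

/-- List chromatic number. -/
noncomputable def listChromNum (G : SimpleGraph V) : ℕ :=
  sInf {k | Choosable G (fun _ => k)}

/-- Chromatic number (as a natural number). -/
noncomputable def chromNum (G : SimpleGraph V) : ℕ :=
  sInf {n | G.Colorable n}

/-- `G` is `(k, ε)`-flexible: for every `k`-assignment `L` and every request `r`
with nonempty domain `D`, some proper `L`-coloring satisfies at least `ε|D|` requests. -/
def FlexSat (G : SimpleGraph V) (k : ℕ) (ε : ℚ) : Prop :=
  ∀ L : V → Finset ℕ, (∀ v, (L v).card = k) →
    ∀ D : Finset V, D.Nonempty → ∀ r : V → ℕ, (∀ v ∈ D, r v ∈ L v) →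
      ∃ c : V → ℕ, (∀ v, c v ∈ L v) ∧ (∀ u v, G.Adj u v → c u ≠ c v) ∧
        ε * (D.card : ℚ) ≤ ((D.filter (fun v => c v = r v)).card : ℚ)

/-- List flexibility number. -/
noncomputable def listFlexNum (G : SimpleGraph V) [Fintype V] : ℕ :=
  sInf {k | FlexSat G k (1 / hallRatio G)}

section AuxStmt6
variable [Fintype V]

lemma indepSet_card_le (G : SimpleGraph V) {D s : Finset V} (hsD : s ⊆ D)
    (hs : ∀ x ∈ s, ∀ y ∈ s, x ≠ y → ¬ G.Adj x y) : s.card ≤ indepNumOn G D :=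
  Finset.le_sup (by simp only [Finset.mem_filter, Finset.mem_powerset]; exact ⟨hsD, hs⟩)

lemma indepNumOn_witness (G : SimpleGraph V) (D : Finset V) :
    ∃ s, s ⊆ D ∧ (∀ x ∈ s, ∀ y ∈ s, x ≠ y → ¬ G.Adj x y) ∧ s.card = indepNumOn G D := by
  obtain ⟨s, hs, h⟩ := Finset.exists_mem_eq_sup
    (D.powerset.filter (fun s => ∀ x ∈ s, ∀ y ∈ s, x ≠ y → ¬ G.Adj x y))
    ⟨∅, by simp⟩ Finset.card
  simp only [Finset.mem_filter, Finset.mem_powerset] at hs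
  exact ⟨s, hs.1, hs.2, h.symm⟩

lemma one_le_indepNumOn (G : SimpleGraph V) {D : Finset V} (hD : D.Nonempty) :
    1 ≤ indepNumOn G D := by
  obtain ⟨v, hv⟩ := hD
  simpa using indepSet_card_le G (s := {v}) (by simpa) (by simp)

lemma indepNumOn_le_card (G : SimpleGraph V) (D : Finset V) : indepNumOn G D ≤ D.card := by
  apply Finset.sup_le
  intro s hs
  simp only [mem_filter, mem_powerset] at hs
  exact Finset.card_le_card hs.1

lemma indepNumOn_mono (G : SimpleGraph V) {D E : Finset V} (h : D ⊆ E) :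
    indepNumOn G D ≤ indepNumOn G E := by
  apply Finset.sup_le
  intro s hs
  simp only [mem_filter, mem_powerset] at hs
  exact indepSet_card_le G (hs.1.trans h) hs.2

lemma indepNumOn_singleton (G : SimpleGraph V) (v : V) : indepNumOn G {v} = 1 := by
  refine le_antisymm ?_ (one_le_indepNumOn G ⟨v, Finset.mem_singleton_self v⟩)
  exact (indepNumOn_le_card G {v}).trans (by simp)

lemma clique_of_indepNumOn_one (G : SimpleGraph V) {K : Finset V}
    (h : indepNumOn G K = 1) : ∀ x ∈ K, ∀ y ∈ K, x ≠ y → G.Adj x y := by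
  intro x hx y hy hxy
  by_contra hadj
  have h2 : ({x, y} : Finset V).card ≤ indepNumOn G K := by
    apply indepSet_card_le
    · intro z hz
      simp only [Finset.mem_insert, Finset.mem_singleton] at hz
      rcases hz with rfl | rfl <;> assumption
    · intro a ha b hb hab
      simp only [Finset.mem_insert, Finset.mem_singleton] at ha hb
      rcases ha with rfl | rfl <;> rcases hb with rfl | rfl
      · exact absurd rfl hab
      · exact hadj
      · exact fun h' => hadj h'.symm
      · exact absurd rfl hab
  rw [Finset.card_pair hxy, h] at h2
  omega

lemma indepNumOn_of_clique (G : SimpleGraph V) {K : Finset V} (hne : K.Nonempty)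
    (h : ∀ x ∈ K, ∀ y ∈ K, x ≠ y → G.Adj x y) : indepNumOn G K = 1 := by
  refine le_antisymm ?_ (one_le_indepNumOn G hne)
  apply Finset.sup_le
  intro s hs
  simp only [mem_filter, mem_powerset] at hs
  by_contra hc
  push_neg at hc
  obtain ⟨x, hx, y, hy, hxy⟩ := Finset.one_lt_card.mp hc
  exact hs.2 x hx y hy hxy (h x (hs.1 hx) y (hs.1 hy) hxy)

lemma card_le_wfun (G : SimpleGraph V) (D : Finset V) :
    D.card ≤ wfun G (indepNumOn G D) :=
  Finset.le_sup (by simp)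

lemma wfun_one_witness (G : SimpleGraph V) (hV : Nonempty V) :
    ∃ K : Finset V, indepNumOn G K = 1 ∧ K.card = wfun G 1 := by
  obtain ⟨v⟩ := hV
  obtain ⟨K, hK, h⟩ := Finset.exists_mem_eq_sup
    (Finset.univ.powerset.filter (fun s : Finset V => indepNumOn G s = 1))
    ⟨{v}, by simp [indepNumOn_singleton]⟩ Finset.card
  simp only [mem_filter, mem_powerset] at hK
  exact ⟨K, hK.2, h.symm⟩

lemma wfun_zero (G : SimpleGraph V) : wfun G 0 = 0 := by
  refine Nat.le_zero.mp (Finset.sup_le ?_)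
  intro s hs
  simp only [mem_filter, mem_powerset] at hs
  by_contra hc
  have hne : s.Nonempty := Finset.card_pos.mp (by omega)
  have := one_le_indepNumOn G hne
  omega

end AuxStmt6

/-- if N ≥ max{1, d_2, …, d_{α(G)}} then ω(K_N ∨ G) = ρ(K_N ∨ G). -/
theorem stmt_6 {V : Type*} [Fintype V] (G : SimpleGraph V)
    (h2 : 2 ≤ indepNum G) (N : ℕ) (hN1 : 1 ≤ (N : ℤ))
    (hNd : ∀ j ∈ Finset.Icc 2 (indepNum G),
      ⌈((wfun G j : ℚ) - (j : ℚ) * (wfun G 1 : ℚ)) / ((j : ℚ) - 1)⌉ ≤ (N : ℤ)) :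
    (cliqueNum (joinG (⊤ : SimpleGraph (Fin N)) G) : ℚ)
      = hallRatio (joinG (⊤ : SimpleGraph (Fin N)) G) := by
  classical
  set J := joinG (⊤ : SimpleGraph (Fin N)) G with hJdef
  have hN : 1 ≤ N := by exact_mod_cast hN1
  have hVne : Nonempty V := by
    rcases isEmpty_or_nonempty V with h | h
    · have : indepNum G ≤ 0 := by
        have := indepNumOn_le_card G (Finset.univ : Finset V)
        simpa [indepNum, Finset.card_univ] using this
      omega
    · exact h
  obtain ⟨K, hK1, hKcard⟩ := wfun_one_witness G hVne
  set a1 := wfun G 1 with ha1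
  have hKne : K.Nonempty := by
    apply Finset.card_pos.mp
    have h1 : 1 ≤ indepNumOn G K := hK1.ge
    have := indepNumOn_le_card G K
    omega
  have hKcl := clique_of_indepNumOn_one G hK1
  set D0 : Finset (Fin N ⊕ V) := (Finset.univ : Finset (Fin N)).disjSum K with hD0
  have hD0card : D0.card = N + a1 := by
    simp [hD0, Finset.card_disjSum, hKcard]
  have hD0clique : ∀ x ∈ D0, ∀ y ∈ D0, x ≠ y → J.Adj x y := by
    intro x hx y hy hxy
    rcases x with a | a <;> rcases y with b | b
    · show a ≠ b
      exact fun h => hxy (congrArg Sum.inl h)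
    · trivial
    · trivial
    · show G.Adj a b
      rw [hD0] at hx hy
      exact hKcl a (by simpa using hx) b (by simpa using hy)
        (fun h => hxy (congrArg Sum.inr h))
  have hD0ne : D0.Nonempty := by
    refine ⟨Sum.inl ⟨0, hN⟩, ?_⟩
    simp [hD0]
  have hD0indep : indepNumOn J D0 = 1 := indepNumOn_of_clique J hD0ne hD0clique
  have hclique : cliqueNum J = N + a1 := by
    apply le_antisymm
    · apply Finset.sup_le
      intro S hS
      simp only [Finset.mem_filter, Finset.mem_powerset] at hS
      have hSr : S.toRight.card ≤ a1 := by
        rcases S.toRight.eq_empty_or_nonempty with h | h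
        · simp [h]
        · have hcl : ∀ x ∈ S.toRight, ∀ y ∈ S.toRight, x ≠ y → G.Adj x y := by
            intro x hx y hy hxy
            exact hS.2 (Sum.inr x) (Finset.mem_toRight.mp hx) (Sum.inr y)
              (Finset.mem_toRight.mp hy) (fun hh => hxy (Sum.inr_injective hh))
          have h1 : indepNumOn G S.toRight = 1 := indepNumOn_of_clique G h hcl
          have h2 := card_le_wfun G S.toRight
          rwa [h1] at h2
      have hSl : S.toLeft.card ≤ N := by
        simpa using Finset.card_le_univ S.toLeft
      have := Finset.card_toLeft_add_card_toRight (u := S)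
      omega
    · rw [← hD0card]
      exact Finset.le_sup (by
        simp only [Finset.mem_filter, Finset.mem_powerset]
        exact ⟨Finset.subset_univ _, hD0clique⟩)
  have hmemD0 : D0 ∈ (Finset.univ.powerset.filter
      (fun s : Finset (Fin N ⊕ V) => s.Nonempty)) := by
    simp only [Finset.mem_filter, Finset.mem_powerset]
    exact ⟨Finset.subset_univ _, hD0ne⟩
  have hne : (Finset.univ.powerset.filter
      (fun s : Finset (Fin N ⊕ V) => s.Nonempty)).Nonempty := ⟨D0, hmemD0⟩
  have hHall : hallRatio J = ((N + a1 : ℕ) : ℚ) := by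
    rw [hallRatio, dif_pos hne]
    apply le_antisymm
    · apply Finset.sup'_le
      intro D hD
      simp only [Finset.mem_filter, Finset.mem_powerset] at hD
      set j := indepNumOn G D.toRight with hj
      have hα1 : 1 ≤ indepNumOn J D := one_le_indepNumOn J hD.2
      have hαj : j ≤ indepNumOn J D := by
        obtain ⟨s, hsD, hind, hcard⟩ := indepNumOn_witness G D.toRight
        have himg : (s.image (Sum.inr : V → Fin N ⊕ V)).card = s.card :=
          Finset.card_image_of_injective _ Sum.inr_injective
        rw [hj, ← hcard, ← himg]
        apply indepSet_card_le
        · intro x hx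
          simp only [Finset.mem_image] at hx
          obtain ⟨a, ha, rfl⟩ := hx
          exact Finset.mem_toRight.mp (hsD ha)
        · intro x hx y hy hxy
          simp only [Finset.mem_image] at hx hy
          obtain ⟨a, ha, rfl⟩ := hx
          obtain ⟨b, hb, rfl⟩ := hy
          exact hind a ha b hb (fun h => hxy (congrArg Sum.inr h))
      have hDcard : D.card ≤ N + wfun G j := by
        have h1 : D.toLeft.card ≤ N := by simpa using Finset.card_le_univ D.toLeft
        have h2 : D.toRight.card ≤ wfun G j := card_le_wfun G D.toRight
        have := Finset.card_toLeft_add_card_toRight (u := D)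
        omega
      have key : (D.card : ℚ) ≤ ((N + a1 : ℕ) : ℚ) * (indepNumOn J D : ℚ) := by
        rcases Nat.lt_or_ge j 2 with hj2 | hj2
        · have hwle : wfun G j ≤ a1 := by
            interval_cases j
            · simp [wfun_zero]
            · exact le_rfl
          have hDle : D.card ≤ N + a1 := hDcard.trans (by omega)
          calc (D.card : ℚ) ≤ ((N + a1 : ℕ) : ℚ) := by exact_mod_cast hDle
            _ ≤ ((N + a1 : ℕ) : ℚ) * (indepNumOn J D : ℚ) := by
                apply le_mul_of_one_le_right (by positivity)
                exact_mod_cast hα1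
        · have hjle : j ≤ indepNum G := indepNumOn_mono G (Finset.subset_univ _)
          have hd := hNd j (Finset.mem_Icc.mpr ⟨hj2, hjle⟩)
          rw [Int.ceil_le] at hd
          have hjpos : (0 : ℚ) < (j : ℚ) - 1 := by
            have h2j : (2 : ℚ) ≤ (j : ℚ) := by exact_mod_cast hj2
            linarith
          rw [div_le_iff₀ hjpos] at hd
          push_cast at hd
          have hc1 : (D.card : ℚ) ≤ (N : ℚ) + (wfun G j : ℚ) := by exact_mod_cast hDcard
          have hc2 : (j : ℚ) ≤ (indepNumOn J D : ℚ) := by exact_mod_cast hαj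
          have hc3 : (0 : ℚ) ≤ (N : ℚ) + (a1 : ℚ) := by positivity
          push_cast
          nlinarith [hc1, hc2, hc3, hd]
      have hαpos : (0 : ℚ) < (indepNumOn J D : ℚ) := by exact_mod_cast hα1
      rw [div_le_iff₀ hαpos]
      exact key
    · refine le_trans ?_ (Finset.le_sup' _ hmemD0)
      rw [hD0indep, hD0card]
      simp
  rw [hclique, hHall]
end

section
/- If G is a finite simple graph with χ_ℓ(G) = χ(G), then χ_ℓ(K_1 ∨ G) = χ(K_1 ∨ G); that is, the cone over a chromatic-choosable graph is chromatic-choosable. -/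
open Classical Finset

variable {V : Type*}

/-- Greedy list coloring on a finite vertex set. -/
lemma greedy_aux (G : SimpleGraph V) (s : Finset V) :
    ∀ L : V → Finset ℕ, (∀ v ∈ s, s.card ≤ (L v).card) →
    ∃ c : V → ℕ, (∀ v ∈ s, c v ∈ L v) ∧ ∀ u ∈ s, ∀ v ∈ s, G.Adj u v → c u ≠ c v := by
  classical
  induction s using Finset.induction_on with
  | empty => intro L _; exact ⟨fun _ => 0, by simp, by simp⟩
  | @insert a s ha ih =>
    intro L hL
    have hs : ∀ v ∈ s, s.card ≤ (L v).card := by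
      intro v hv
      have := hL v (Finset.mem_insert_of_mem hv)
      rw [Finset.card_insert_of_notMem ha] at this
      omega
    obtain ⟨c, hc1, hc2⟩ := ih L hs
    set T : Finset ℕ := (s.filter (fun u => G.Adj a u)).image c with hT
    have hTcard : T.card ≤ s.card :=
      le_trans (Finset.card_image_le) (Finset.card_filter_le _ _)
    have hLa : s.card < (L a).card := by
      have := hL a (Finset.mem_insert_self a s)
      rw [Finset.card_insert_of_notMem ha] at this
      omega
    have hns : ¬ L a ⊆ T := fun hsub => by
      have := Finset.card_le_card hsub
      omega
    obtain ⟨x, hxL, hxT⟩ := Finset.not_subset.mp hns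
    refine ⟨Function.update c a x, ?_, ?_⟩
    · intro v hv
      rcases Finset.mem_insert.mp hv with rfl | hv
      · simpa using hxL
      · have hva : v ≠ a := fun e => ha (e ▸ hv)
        rw [Function.update_of_ne hva]
        exact hc1 v hv
    · intro u hu v hv hadj
      by_cases hua : u = a <;> by_cases hva : v = a
      · subst hua; subst hva; exact absurd hadj (G.irrefl)
      · subst hua
        have hv' : v ∈ s := (Finset.mem_insert.mp hv).resolve_left hva
        rw [Function.update_self, Function.update_of_ne hva]
        intro e
        exact hxT (e ▸ Finset.mem_image_of_mem c
          (Finset.mem_filter.mpr ⟨hv', hadj⟩))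
      · subst hva
        have hu' : u ∈ s := (Finset.mem_insert.mp hu).resolve_left hua
        rw [Function.update_self, Function.update_of_ne hua]
        intro e
        exact hxT (e ▸ Finset.mem_image_of_mem c
          (Finset.mem_filter.mpr ⟨hu', hadj.symm⟩))
      · have hu' : u ∈ s := (Finset.mem_insert.mp hu).resolve_left hua
        have hv' : v ∈ s := (Finset.mem_insert.mp hv).resolve_left hva
        rw [Function.update_of_ne hua, Function.update_of_ne hva]
        exact hc2 u hu' v hv' hadj

lemma choosable_card (G : SimpleGraph V) [Fintype V] :
    Choosable G (fun _ => Fintype.card V) := by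
  intro L hL
  obtain ⟨c, hc1, hc2⟩ := greedy_aux G Finset.univ L
    (fun v _ => by rw [Finset.card_univ, hL v])
  exact ⟨c, fun v => hc1 v (Finset.mem_univ v),
    fun u v hadj => hc2 u (Finset.mem_univ u) v (Finset.mem_univ v) hadj⟩

lemma choosable_colorable (G : SimpleGraph V) {k : ℕ}
    (h : Choosable G (fun _ => k)) : G.Colorable k := by
  obtain ⟨c, hc1, hc2⟩ := h (fun _ => Finset.range k) (fun _ => Finset.card_range k)
  exact ⟨SimpleGraph.Coloring.mk
    (fun v => ⟨c v, Finset.mem_range.mp (hc1 v)⟩)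
    (fun {u v} hadj => by simpa [Fin.ext_iff] using hc2 u v hadj)⟩

lemma chrom_le_listChrom (G : SimpleGraph V) [Fintype V] :
    chromNum G ≤ listChromNum G := by
  have hne : {k | Choosable G (fun _ => k)}.Nonempty :=
    ⟨Fintype.card V, choosable_card G⟩
  have hmem : Choosable G (fun _ => listChromNum G) := Nat.sInf_mem hne
  exact Nat.sInf_le (choosable_colorable G hmem)

lemma cone_choosable (G : SimpleGraph V) {k : ℕ}
    (h : Choosable G (fun _ => k)) :
    Choosable (joinG (⊤ : SimpleGraph (Fin 1)) G) (fun _ => k + 1) := by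
  classical
  intro L hL
  have hne : (L (Sum.inl 0)).Nonempty := by
    have h0 : (L (Sum.inl 0)).card = k + 1 := hL (Sum.inl 0)
    rw [← Finset.card_pos, h0]; omega
  obtain ⟨a, ha⟩ := hne
  have hTex : ∀ v : V, ∃ t ⊆ (L (Sum.inr v)).erase a, t.card = k := by
    intro v
    refine Finset.exists_subset_card_eq ?_
    have h1 : (L (Sum.inr v)).card = k + 1 := hL (Sum.inr v)
    have h2 : (L (Sum.inr v)).card - 1 ≤ ((L (Sum.inr v)).erase a).card :=
      Finset.pred_card_le_card_erase
    omega
  choose T hT1 hT2 using hTex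
  obtain ⟨c, hc1, hc2⟩ := h T hT2
  have hcne : ∀ v : V, c v ≠ a := fun v =>
    (Finset.mem_erase.mp (hT1 v (hc1 v))).1
  refine ⟨Sum.elim (fun _ => a) c, ?_, ?_⟩
  · rintro (i | v)
    · have : i = 0 := Subsingleton.elim i 0
      subst this; simpa using ha
    · exact (Finset.mem_erase.mp (hT1 v (hc1 v))).2
  · rintro (i | u) (j | v) hadj
    · exact absurd (congrArg Sum.inl (Subsingleton.elim i j)) hadj.ne
    · exact fun e => hcne v e.symm
    · exact fun e => hcne u e
    · exact hc2 u v hadj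

lemma chrom_cone_ge (G : SimpleGraph V) [Fintype V] :
    chromNum G + 1 ≤ chromNum (joinG (⊤ : SimpleGraph (Fin 1)) G) := by
  classical
  have hne : {n | (joinG (⊤ : SimpleGraph (Fin 1)) G).Colorable n}.Nonempty :=
    ⟨Fintype.card (Fin 1 ⊕ V), SimpleGraph.colorable_of_fintype _⟩
  have hm : (joinG (⊤ : SimpleGraph (Fin 1)) G).Colorable
      (chromNum (joinG (⊤ : SimpleGraph (Fin 1)) G)) := Nat.sInf_mem hne
  set m := chromNum (joinG (⊤ : SimpleGraph (Fin 1)) G) with hmdef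
  obtain ⟨C⟩ := hm
  set a : Fin m := C (Sum.inl 0) with hadef
  have hmpos : 0 < m := a.pos
  have hvne : ∀ v : V, C (Sum.inr v) ≠ a := by
    intro v
    have hadj : (joinG (⊤ : SimpleGraph (Fin 1)) G).Adj (Sum.inl 0) (Sum.inr v) :=
      trivial
    exact fun e => (C.valid hadj) (e.symm)
  have hcol : G.Colorable (Fintype.card {x : Fin m // x ≠ a}) := by
    refine SimpleGraph.Coloring.colorable (SimpleGraph.Coloring.mk
      (fun v => ⟨C (Sum.inr v), hvne v⟩) ?_)
    intro u v hadj e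
    exact (C.valid (show (joinG (⊤ : SimpleGraph (Fin 1)) G).Adj
      (Sum.inr u) (Sum.inr v) from hadj)) (congrArg Subtype.val e)
  have hcard : Fintype.card {x : Fin m // x ≠ a} = m - 1 := by
    simp [Fintype.card_subtype_compl, Fintype.card_fin]
  rw [hcard] at hcol
  have h5 : chromNum G ≤ m - 1 :=
    Nat.sInf_le (show m - 1 ∈ {n | G.Colorable n} from hcol)
  omega

/-- the cone of a chromatic-choosable graph is chromatic-choosable. -/
theorem stmt_8 {V : Type*} [Fintype V] (G : SimpleGraph V)
    (h : listChromNum G = chromNum G) :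
    listChromNum (joinG (⊤ : SimpleGraph (Fin 1)) G)
      = chromNum (joinG (⊤ : SimpleGraph (Fin 1)) G) := by
  have hne : {k | Choosable G (fun _ => k)}.Nonempty :=
    ⟨Fintype.card V, choosable_card G⟩
  have h1 : Choosable G (fun _ => listChromNum G) := Nat.sInf_mem hne
  have h2 : listChromNum (joinG (⊤ : SimpleGraph (Fin 1)) G)
      ≤ listChromNum G + 1 := Nat.sInf_le (cone_choosable G h1)
  have h3 : chromNum (joinG (⊤ : SimpleGraph (Fin 1)) G)
      ≤ listChromNum (joinG (⊤ : SimpleGraph (Fin 1)) G) := chrom_le_listChrom _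
  have h4 := chrom_cone_ge G
  omega
end
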